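/- arXiv:1403.2433 — 6 statements merged into one kernel-verified Lean document; each statement's English description precedes it below -/
import Mathlib

section
/- Let Θ be a finite nonempty set and Φ : Δ_Θ → ℝ a differentiable entropy. Then for every μ in the relative interior of Δ_Θ and every v ∈ ℝ^Θ: Φ*(∇Φ(μ)) − Φ*(∇Φ(μ) − v) = inf_{μ' ∈ Δ_Θ} [⟨μ', v⟩ + D_Φ(μ', μ)]. -/
open Finset

/-- The probability simplex over a finite set `Θ`. -/
def probSimplex (Θ : Type*) [Fintype Θ] : Set (Θ → ℝ) :=
  {μ | (∀ θ, 0 ≤ μ θ) ∧ ∑ θ, μ θ = 1}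

/-- The relative interior of the probability simplex. -/
def probSimplexRI (Θ : Type*) [Fintype Θ] : Set (Θ → ℝ) :=
  {μ | (∀ θ, 0 < μ θ) ∧ ∑ θ, μ θ = 1}

/-- Standard inner product on `ℝ^Θ`. -/
noncomputable def ip {Θ : Type*} [Fintype Θ] (v w : Θ → ℝ) : ℝ := ∑ θ, v θ * w θ

/-- Convex conjugate of a function on the probability simplex:
`Φ*(v) = sup_{μ ∈ Δ_Θ} ⟨μ, v⟩ − Φ(μ)`. -/
noncomputable def conjF {Θ : Type*} [Fintype Θ] (Φ : (Θ → ℝ) → ℝ) (v : Θ → ℝ) : ℝ :=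
  sSup ((fun μ => ip μ v - Φ μ) '' probSimplex Θ)

/-- The continuous linear functional `w ↦ ⟨g, w⟩` associated with a vector `g : Θ → ℝ`;
used to express that `g` is a gradient. -/
noncomputable def toCLM {Θ : Type*} [Fintype Θ] (g : Θ → ℝ) : (Θ → ℝ) →L[ℝ] ℝ :=
  ∑ θ, g θ • (ContinuousLinearMap.proj θ : (Θ → ℝ) →L[ℝ] ℝ)

/-- Bregman divergence `D_Φ(μ', μ) = Φ(μ') − Φ(μ) − ⟨∇Φ(μ), μ' − μ⟩`, where the
gradient of `Φ` is given by `g`. -/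
noncomputable def bregDiv {Θ : Type*} [Fintype Θ] (Φ : (Θ → ℝ) → ℝ)
    (g : (Θ → ℝ) → Θ → ℝ) (μ' μ : Θ → ℝ) : ℝ :=
  Φ μ' - Φ μ - ip (g μ) (fun θ => μ' θ - μ θ)

/-- The proper loss `λ^Φ(μ) = Φ*(∇Φ(μ))·𝟏 − ∇Φ(μ)` associated with entropy `Φ`
with gradient `g`. -/
noncomputable def lamLoss {Θ : Type*} [Fintype Θ] (Φ : (Θ → ℝ) → ℝ)
    (g : (Θ → ℝ) → Θ → ℝ) (μ : Θ → ℝ) : Θ → ℝ :=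
  fun θ => conjF Φ (g μ) - g μ θ

/-- Negative Shannon entropy `(−H)(μ) = ∑ θ, μ(θ) log μ(θ)` (with `0 log 0 = 0`,
since `Real.log 0 = 0`). -/
noncomputable def negH {Θ : Type*} [Fintype Θ] (μ : Θ → ℝ) : ℝ :=
  ∑ θ, μ θ * Real.log (μ θ)

lemma convex_probSimplex (Θ : Type*) [Fintype Θ] : Convex ℝ (probSimplex Θ) := by
  intro x hx y hy a b ha hb hab
  refine ⟨fun θ => add_nonneg (mul_nonneg ha (hx.1 θ)) (mul_nonneg hb (hy.1 θ)), ?_⟩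
  simp [Finset.sum_add_distrib, ← Finset.mul_sum, hx.2, hy.2, hab]

lemma toCLM_apply {Θ : Type*} [Fintype Θ] (g w : Θ → ℝ) : toCLM g w = ip g w := by
  simp [toCLM, ip, ContinuousLinearMap.sum_apply]

lemma grad_ineq {Θ : Type*} [Fintype Θ] (Φ : (Θ → ℝ) → ℝ) (g : Θ → ℝ)
    (hconv : ConvexOn ℝ (probSimplex Θ) Φ) (μ μ' : Θ → ℝ)
    (hμ : μ ∈ probSimplex Θ) (hμ' : μ' ∈ probSimplex Θ)
    (hF : HasFDerivWithinAt Φ (toCLM g) (probSimplex Θ) μ) :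
    ip g (fun θ => μ' θ - μ θ) ≤ Φ μ' - Φ μ := by
  set A : ℝ →ᵃ[ℝ] (Θ → ℝ) := AffineMap.lineMap μ μ' with hA
  have hmaps : Set.MapsTo A (Set.Icc (0:ℝ) 1) (probSimplex Θ) := by
    intro t ht
    have := (convex_probSimplex Θ).segment_subset hμ hμ'
      (by rw [segment_eq_image_lineMap]; exact ⟨t, ht, rfl⟩)
    exact this
  have hφconv : ConvexOn ℝ (Set.Icc (0:ℝ) 1) (Φ ∘ A) := by
    refine (hconv.comp_affineMap A).subset ?_ (convex_Icc 0 1)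
    intro t ht; exact hmaps ht
  have hγ : HasDerivWithinAt (fun t : ℝ => A t) (μ' - μ) (Set.Icc (0:ℝ) 1) 0 := by
    have : HasDerivAt (fun t : ℝ => A t) (μ' - μ) 0 := by
      have heq : (fun t : ℝ => A t) = fun t => t • (μ' - μ) + μ := by
        funext t; simp only [hA, AffineMap.lineMap_apply_module]; module
      rw [heq]
      simpa using ((hasDerivAt_id (0:ℝ)).smul_const (μ' - μ)).add_const μ
    exact this.hasDerivWithinAt
  have hA0 : A 0 = μ := by simp [hA]
  have hd : HasDerivWithinAt (Φ ∘ A) (toCLM g (μ' - μ)) (Set.Icc (0:ℝ) 1) 0 := by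
    have := (hA0 ▸ hF).comp_hasDerivWithinAt 0 hγ hmaps
    exact this
  have := hφconv.le_slope_of_hasDerivWithinAt (Set.left_mem_Icc.2 zero_le_one)
    (Set.right_mem_Icc.2 zero_le_one) zero_lt_one hd
  rw [slope_def_field] at this
  have hA1 : A 1 = μ' := by simp [hA]
  have h2 : toCLM g (μ' - μ) = ip g (fun θ => μ' θ - μ θ) := by
    rw [toCLM_apply]; rfl
  calc ip g (fun θ => μ' θ - μ θ) = toCLM g (μ' - μ) := h2.symm
    _ ≤ (Φ (A 1) - Φ (A 0)) / (1 - 0) := this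
    _ = Φ μ' - Φ μ := by rw [hA0, hA1]; ring

lemma sInf_const_sub (c : ℝ) (s : Set ℝ) (hs : s.Nonempty) (hb : BddAbove s) :
    sInf ((fun x => c - x) '' s) = c - sSup s := by
  refine IsGLB.csInf_eq ?_ (hs.image _)
  constructor
  · rintro y ⟨x, hx, rfl⟩
    have := le_csSup hb hx
    simp only
    linarith
  · intro b hbnd
    have : sSup s ≤ c - b := by
      apply csSup_le hs
      intro x hx
      have : b ≤ c - x := hbnd ⟨x, hx, rfl⟩
      linarith
    linarith


/-- Lemma 1 of the paper: For a differentiable entropy `Φ`,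
`Φ*(∇Φ(μ)) − Φ*(∇Φ(μ) − v) = inf_{μ' ∈ Δ_Θ} ⟨μ', v⟩ + D_Φ(μ', μ)`. -/
theorem conjF_sub_conjF_eq_inf {Θ : Type*} [Fintype Θ] [Nonempty Θ]
    (Φ : (Θ → ℝ) → ℝ) (gradΦ : (Θ → ℝ) → Θ → ℝ)
    (hconv : ConvexOn ℝ (probSimplex Θ) Φ)
    (hlsc : LowerSemicontinuousOn Φ (probSimplex Θ))
    (hdiff : ∀ μ ∈ probSimplexRI Θ,
      HasFDerivWithinAt Φ (toCLM (gradΦ μ)) (probSimplex Θ) μ)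
    (μ : Θ → ℝ) (hμ : μ ∈ probSimplexRI Θ) (v : Θ → ℝ) :
    conjF Φ (gradΦ μ) - conjF Φ (gradΦ μ - v)
      = sInf ((fun μ' => ip μ' v + bregDiv Φ gradΦ μ' μ) '' probSimplex Θ) := by
  obtain ⟨hpos, hsum⟩ := hμ
  have hμΔ : μ ∈ probSimplex Θ := ⟨fun θ => (hpos θ).le, hsum⟩
  set g := gradΦ μ with hg
  have key : ∀ μ' ∈ probSimplex Θ, ip g (fun θ => μ' θ - μ θ) ≤ Φ μ' - Φ μ :=
    fun μ' hμ' => grad_ineq Φ g hconv μ μ' hμΔ hμ' (hdiff μ ⟨hpos, hsum⟩)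
  have hsplit : ∀ μ' : Θ → ℝ, ip g (fun θ => μ' θ - μ θ) = ip μ' g - ip μ g := by
    intro μ'
    simp [ip, mul_sub, Finset.sum_sub_distrib, mul_comm]
  have key' : ∀ μ' ∈ probSimplex Θ, ip μ' g - Φ μ' ≤ ip μ g - Φ μ := by
    intro μ' hμ'
    have h1 := key μ' hμ'
    rw [hsplit μ'] at h1
    linarith
  set c := ip μ g - Φ μ with hc
  set f2 : (Θ → ℝ) → ℝ := fun μ' => ip μ' (g - v) - Φ μ' with hf2
  have hf2split : ∀ μ' : Θ → ℝ, f2 μ' = ip μ' g - ip μ' v - Φ μ' := by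
    intro μ'
    simp [hf2, ip, Pi.sub_apply, mul_sub, Finset.sum_sub_distrib]
  have hptwise : ∀ μ' : Θ → ℝ, ip μ' v + bregDiv Φ gradΦ μ' μ = c - f2 μ' := by
    intro μ'
    rw [hf2split μ', hc, bregDiv, ← hg, hsplit μ']
    ring
  have hle1 : ∀ μ' ∈ probSimplex Θ, μ' ∈ probSimplex Θ → True := fun _ _ _ => trivial
  have hmule : ∀ (μ' : Θ → ℝ), μ' ∈ probSimplex Θ → ∀ θ, μ' θ ≤ 1 := by
    intro μ' hμ' θ
    calc μ' θ ≤ ∑ θ', μ' θ' :=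
          Finset.single_le_sum (fun i _ => hμ'.1 i) (Finset.mem_univ θ)
      _ = 1 := hμ'.2
  have hipv : ∀ (μ' : Θ → ℝ), μ' ∈ probSimplex Θ → -ip μ' v ≤ ∑ θ, |v θ| := by
    intro μ' hμ'
    rw [ip, ← Finset.sum_neg_distrib]
    apply Finset.sum_le_sum
    intro θ _
    have h1 : |μ' θ * v θ| ≤ |v θ| := by
      rw [abs_mul, abs_of_nonneg (hμ'.1 θ)]
      exact mul_le_of_le_one_left (abs_nonneg _) (hmule μ' hμ' θ)
    have := neg_abs_le (μ' θ * v θ)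
    linarith
  have hbdd1 : BddAbove ((fun μ' => ip μ' g - Φ μ') '' probSimplex Θ) := by
    refine ⟨c, ?_⟩
    rintro y ⟨μ', hμ', rfl⟩
    exact key' μ' hμ'
  have hbdd2 : BddAbove (f2 '' probSimplex Θ) := by
    refine ⟨c + ∑ θ, |v θ|, ?_⟩
    rintro y ⟨μ', hμ', rfl⟩
    have h1 := key' μ' hμ'
    have h2 := hipv μ' hμ'
    rw [hf2split μ']
    linarith
  have hS2ne : (f2 '' probSimplex Θ).Nonempty := ⟨_, μ, hμΔ, rfl⟩
  have hconj_g : conjF Φ g = c := by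
    apply le_antisymm
    · have hne : ((fun μ' => ip μ' g - Φ μ') '' probSimplex Θ).Nonempty := ⟨_, μ, hμΔ, rfl⟩
      apply csSup_le hne
      rintro y ⟨μ', hμ', rfl⟩
      exact key' μ' hμ'
    · exact le_csSup hbdd1 ⟨μ, hμΔ, rfl⟩
  have himg : (fun μ' => ip μ' v + bregDiv Φ gradΦ μ' μ) '' probSimplex Θ
      = (fun x => c - x) '' (f2 '' probSimplex Θ) := by
    rw [Set.image_image]
    exact Set.image_congr fun μ' _ => hptwise μ'
  rw [himg, sInf_const_sub c _ hS2ne hbdd2, hconj_g]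
  rfl
end

section
/- Let Θ be a finite nonempty set, Φ : Δ_Θ → ℝ a differentiable entropy, and define the loss λ^Φ(μ) := Φ*(∇Φ(μ))·𝟏 − ∇Φ(μ) ∈ ℝ^Θ. Then for all μ ∈ Δ_Θ and all μ' in the relative interior of Δ_Θ: ⟨μ, λ^Φ(μ')⟩ − ⟨μ, λ^Φ(μ)⟩ = D_Φ(μ, μ'). -/
open Finset

/-- proof of Lemma 3 of the paper: For a differentiable entropy `Φ`
satisfying the Fenchel–Young equality, the loss `λ^Φ(μ) = Φ*(∇Φ(μ))·𝟏 − ∇Φ(μ)`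
satisfies `⟨μ, λ^Φ(μ')⟩ − ⟨μ, λ^Φ(μ)⟩ = D_Φ(μ, μ')`. -/
theorem lamLoss_regret_eq_bregDiv {Θ : Type*} [Fintype Θ] [Nonempty Θ]
    (Φ : (Θ → ℝ) → ℝ) (gradΦ : (Θ → ℝ) → Θ → ℝ)
    (hconv : ConvexOn ℝ (probSimplex Θ) Φ)
    (hlsc : LowerSemicontinuousOn Φ (probSimplex Θ))
    (hdiff : ∀ μ ∈ probSimplexRI Θ,
      HasFDerivWithinAt Φ (toCLM (gradΦ μ)) (probSimplex Θ) μ)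
    (hFY : ∀ μ ∈ probSimplex Θ, conjF Φ (gradΦ μ) = ip μ (gradΦ μ) - Φ μ)
    (μ : Θ → ℝ) (hμ : μ ∈ probSimplex Θ)
    (μ' : Θ → ℝ) (hμ' : μ' ∈ probSimplexRI Θ) :
    ip μ (lamLoss Φ gradΦ μ') - ip μ (lamLoss Φ gradΦ μ)
      = bregDiv Φ gradΦ μ μ' := by
  have hμ'S : μ' ∈ probSimplex Θ := ⟨fun θ => (hμ'.1 θ).le, hμ'.2⟩
  have h1 : ∀ ν, ν ∈ probSimplex Θ →
      ip μ (lamLoss Φ gradΦ ν) = conjF Φ (gradΦ ν) - ip μ (gradΦ ν) := by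
    intro ν hν
    simp only [ip, lamLoss, mul_sub, Finset.sum_sub_distrib, ← Finset.sum_mul, hμ.2, one_mul]
  rw [h1 μ' hμ'S, h1 μ hμ, hFY μ hμ, hFY μ' hμ'S]
  simp only [bregDiv, ip, mul_sub, Finset.sum_sub_distrib]
  simp only [mul_comm]
  ring
end

section
/- Let Θ be a finite nonempty set, η > 0, and Φ = (1/η)(−H) where H is Shannon entropy, with λ^Φ(μ) := Φ*(∇Φ(μ))·𝟏 − ∇Φ(μ). Then for every μ in the relative interior of Δ_Θ and every a ∈ ℝ^Θ: −Φ*(−λ^Φ(μ) − a) = −(1/η) log Σ_{θ∈Θ} exp(−η·a(θ))·μ(θ). In particular, a real number c satisfies c ≤ −Φ*(−λ^Φ(μ) − a) if and only if c ≤ −(1/η) log Σ_θ exp(−η·a(θ))·μ(θ), so Φ-mixability for this Φ coincides with Vovk's η-mixability condition. -/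
open Finset

lemma term_ineq (p x Z : ℝ) (hp : 0 ≤ p) (hZ : 0 < Z) :
    p * x - p * Real.log p - p * Real.log Z ≤ Real.exp x / Z - p := by
  rcases eq_or_lt_of_le hp with h | h
  · rw [← h]
    simp
    positivity
  · have h1 : x - Real.log p - Real.log Z = Real.log (Real.exp x / (p * Z)) := by
      rw [Real.log_div (Real.exp_ne_zero x) (by positivity), Real.log_exp,
        Real.log_mul (ne_of_gt h) (ne_of_gt hZ)]
      ring
    have h2 : Real.log (Real.exp x / (p * Z)) ≤ Real.exp x / (p * Z) - 1 :=
      Real.log_le_sub_one_of_pos (by positivity)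
    have hne : p ≠ 0 := ne_of_gt h
    have hZne : Z ≠ 0 := ne_of_gt hZ
    calc p * x - p * Real.log p - p * Real.log Z
        = p * (x - Real.log p - Real.log Z) := by ring
      _ = p * Real.log (Real.exp x / (p * Z)) := by rw [h1]
      _ ≤ p * (Real.exp x / (p * Z) - 1) := mul_le_mul_of_nonneg_left h2 hp
      _ = Real.exp x / Z - p := by field_simp

lemma conjF_negH {Θ : Type*} [Fintype Θ] [Nonempty Θ] (η : ℝ) (hη : 0 < η) (v : Θ → ℝ) :
    conjF (fun ν => (1 / η) * negH ν) v
      = (1 / η) * Real.log (∑ θ, Real.exp (η * v θ)) := by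
  set Z : ℝ := ∑ θ, Real.exp (η * v θ) with hZdef
  have hZ : 0 < Z := Finset.sum_pos (fun θ _ => Real.exp_pos _) Finset.univ_nonempty
  have hstar : IsGreatest ((fun μ => ip μ v - (1 / η) * negH μ) '' probSimplex Θ)
      ((1 / η) * Real.log Z) := by
    constructor
    · refine ⟨fun θ => Real.exp (η * v θ) / Z, ⟨fun θ => by positivity, ?_⟩, ?_⟩
      · rw [← Finset.sum_div, ← hZdef, div_self (ne_of_gt hZ)]
      · have hlog : ∀ θ : Θ, Real.log (Real.exp (η * v θ) / Z) = η * v θ - Real.log Z := by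
          intro θ
          rw [Real.log_div (Real.exp_ne_zero _) (ne_of_gt hZ), Real.log_exp]
        simp only [ip, negH, hlog]
        have : ∀ θ : Θ, Real.exp (η * v θ) / Z * v θ
            - (1 / η) * (Real.exp (η * v θ) / Z * (η * v θ - Real.log Z))
            = (1 / η) * Real.log Z * (Real.exp (η * v θ) / Z) := by
          intro θ; field_simp; ring
        rw [Finset.mul_sum, ← Finset.sum_sub_distrib]
        calc ∑ θ, (Real.exp (η * v θ) / Z * v θ
              - 1 / η * (Real.exp (η * v θ) / Z * (η * v θ - Real.log Z)))
            = ∑ θ, (1 / η) * Real.log Z * (Real.exp (η * v θ) / Z) := by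
              exact Finset.sum_congr rfl (fun θ _ => this θ)
          _ = (1 / η) * Real.log Z * (∑ θ, Real.exp (η * v θ) / Z) := by
              rw [Finset.mul_sum]
          _ = (1 / η) * Real.log Z := by
              rw [← Finset.sum_div, ← hZdef, div_self (ne_of_gt hZ), mul_one]
    · rintro x ⟨μ, ⟨hμ0, hμ1⟩, rfl⟩
      have key : η * ip μ v - negH μ ≤ Real.log Z := by
        have h1 : η * ip μ v - negH μ - Real.log Z
            = ∑ θ, (μ θ * (η * v θ) - μ θ * Real.log (μ θ) - μ θ * Real.log Z) := by
          simp only [ip, negH]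
          rw [Finset.sum_sub_distrib, Finset.sum_sub_distrib, Finset.mul_sum,
            ← Finset.sum_mul, hμ1, one_mul]
          congr 1
          congr 1
          exact Finset.sum_congr rfl (fun θ _ => by ring)
        have h2 : ∑ θ, (μ θ * (η * v θ) - μ θ * Real.log (μ θ) - μ θ * Real.log Z)
            ≤ ∑ θ, (Real.exp (η * v θ) / Z - μ θ) :=
          Finset.sum_le_sum (fun θ _ => term_ineq (μ θ) (η * v θ) Z (hμ0 θ) hZ)
        have h3 : ∑ θ, (Real.exp (η * v θ) / Z - μ θ) = 0 := by
          rw [Finset.sum_sub_distrib, ← Finset.sum_div, ← hZdef,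
            div_self (ne_of_gt hZ), hμ1, sub_self]
        linarith
      have := mul_le_mul_of_nonneg_left key (le_of_lt (one_div_pos.mpr hη))
      have heq : (1 / η) * (η * ip μ v - negH μ) = ip μ v - (1 / η) * negH μ := by
        field_simp
      linarith [heq ▸ this]
  exact hstar.csSup_eq

/-- for `Φ = (1/η)(−H)` with gradient `[∇Φ(μ)]_θ = (1/η)(log μ(θ)+1)`,
`−Φ*(−λ^Φ(μ) − a) = −(1/η) log ∑_θ exp(−η a(θ)) μ(θ)`, so `Φ`-mixability for this `Φ`
coincides with Vovk's `η`-mixability condition. -/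
theorem mixability_shannon_eq_vovk {Θ : Type*} [Fintype Θ] [Nonempty Θ]
    (η : ℝ) (hη : 0 < η)
    (μ : Θ → ℝ) (hμ : μ ∈ probSimplexRI Θ) (a : Θ → ℝ) :
    (-conjF (fun ν => (1 / η) * negH ν)
          (-(lamLoss (fun ν => (1 / η) * negH ν)
              (fun ν θ' => (1 / η) * (Real.log (ν θ') + 1)) μ) - a)
        = -(1 / η) * Real.log (∑ θ, Real.exp (-η * a θ) * μ θ)) ∧
      ∀ c : ℝ,
        (c ≤ -conjF (fun ν => (1 / η) * negH ν)
            (-(lamLoss (fun ν => (1 / η) * negH ν)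
                (fun ν θ' => (1 / η) * (Real.log (ν θ') + 1)) μ) - a)
          ↔ c ≤ -(1 / η) * Real.log (∑ θ, Real.exp (-η * a θ) * μ θ)) := by
  obtain ⟨hμ0, hμ1⟩ := hμ
  have hg : conjF (fun ν => (1 / η) * negH ν)
      (fun θ' => (1 / η) * (Real.log (μ θ') + 1)) = 1 / η := by
    rw [conjF_negH η hη]
    have h1 : ∀ θ : Θ, Real.exp (η * ((1 / η) * (Real.log (μ θ) + 1)))
        = μ θ * Real.exp 1 := by
      intro θ
      rw [show η * ((1 / η) * (Real.log (μ θ) + 1)) = Real.log (μ θ) + 1 by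
        field_simp, Real.exp_add, Real.exp_log (hμ0 θ)]
    rw [Finset.sum_congr rfl (fun θ _ => h1 θ), ← Finset.sum_mul, hμ1, one_mul,
      Real.log_exp, mul_one]
  have hmain : conjF (fun ν => (1 / η) * negH ν)
      (-(lamLoss (fun ν => (1 / η) * negH ν)
          (fun ν θ' => (1 / η) * (Real.log (ν θ') + 1)) μ) - a)
      = (1 / η) * Real.log (∑ θ, Real.exp (-η * a θ) * μ θ) := by
    rw [conjF_negH η hη]
    congr 1
    congr 1
    apply Finset.sum_congr rfl
    intro θ _
    simp only [lamLoss, hg, Pi.sub_apply, Pi.neg_apply]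
    rw [show η * (-(1 / η - 1 / η * (Real.log (μ θ) + 1)) - a θ)
        = Real.log (μ θ) + (-η * a θ) by field_simp; ring,
      Real.exp_add, Real.exp_log (hμ0 θ)]
    ring
  refine ⟨by rw [hmain]; ring, fun c => by rw [hmain]; constructor <;> intro h <;> linarith⟩
end

section
/- Let Θ be a finite nonempty set and Φ : Δ_Θ → ℝ a differentiable strictly convex entropy whose conjugate Φ* is differentiable, with ∇Φ and ∇Φ* mutually inverse bijections between the relative interior of Δ_Θ and ℝ^Θ modulo translation by multiples of 𝟏 (i.e., ∇Φ*(∇Φ(μ)) = μ and ∇Φ(∇Φ*(v)) − v is a multiple of 𝟏). Then for every μ₀ in the relative interior of Δ_Θ and every a ∈ ℝ^Θ, the point μ* := ∇Φ*(∇Φ(μ₀) − a) attains the infimum of μ ↦ ⟨μ, a⟩ + D_Φ(μ, μ₀) over Δ_Θ. -/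
open Finset Filter Topology

lemma convex_grad_ineq {E : Type*} [NormedAddCommGroup E] [NormedSpace ℝ E]
    {s : Set E} {f : E → ℝ} {f' : E →L[ℝ] ℝ} {x y : E}
    (hf : ConvexOn ℝ s f) (hx : x ∈ s) (hy : y ∈ s)
    (hd : HasFDerivWithinAt f f' s x) : f' (y - x) ≤ f y - f x := by
  set g : ℝ → E := fun t => x + t • (y - x) with hg
  have hgmap : ∀ t ∈ Set.Icc (0:ℝ) 1, g t ∈ s := by
    intro t ht
    have := hf.1 hx hy (by linarith [ht.1, ht.2] : 0 ≤ 1 - t) ht.1 (by ring)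
    convert this using 1
    simp [hg]
    module
  have hgd : HasDerivWithinAt g (y - x) (Set.Icc (0:ℝ) 1) 0 := by
    have : HasDerivAt g (y - x) 0 := by
      simpa [hg] using ((hasDerivAt_id (0:ℝ)).smul_const (y - x)).const_add x
    exact this.hasDerivWithinAt
  have hg0 : g 0 = x := by simp [hg]
  have hcomp : HasDerivWithinAt (f ∘ g) (f' (y - x)) (Set.Icc (0:ℝ) 1) 0 := by
    exact HasFDerivWithinAt.comp_hasDerivWithinAt_of_eq (0:ℝ) hd hgd hgmap hg0.symm
  have hslope : Tendsto (slope (f ∘ g) 0) (𝓝[Set.Icc (0:ℝ) 1 \ {0}] 0) (𝓝 (f' (y - x))) :=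
    (hasDerivWithinAt_iff_tendsto_slope).1 hcomp
  have hset : Set.Icc (0:ℝ) 1 \ {0} = Set.Ioc 0 1 := by
    ext t; simp [Set.mem_Ioc, Set.mem_Icc, and_comm, lt_iff_le_and_ne, and_assoc, eq_comm]
  rw [hset] at hslope
  have hne : (𝓝[Set.Ioc (0:ℝ) 1] 0).NeBot := by
    refine mem_closure_iff_nhdsWithin_neBot.1 ?_
    rw [closure_Ioc one_ne_zero.symm]
    exact Set.mem_Icc.2 ⟨le_refl 0, zero_le_one⟩
  refine le_of_tendsto hslope ?_
  filter_upwards [self_mem_nhdsWithin] with t ht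
  have ht0 : (0:ℝ) < t := ht.1
  have hconv := hf.2 hx hy (by linarith [ht.2] : 0 ≤ 1 - t) (le_of_lt ht0) (by ring)
  have hgt : g t = (1 - t) • x + t • y := by simp [hg]; module
  have hfle : f (g t) ≤ (1 - t) * f x + t * f y := by rw [hgt]; simpa using hconv
  rw [slope_def_field]
  have : (f (g t) - f (g 0)) / t ≤ f y - f x := by
    rw [div_le_iff₀ ht0, hg0]
    nlinarith
  simpa [div_eq_inv_mul, hg0] using this




open Finset

/-- for a strictly convex differentiable entropy `Φ` whose conjugate is
differentiable, with `∇Φ` and `∇Φ*` mutually inverse (modulo multiples of `𝟏`), the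
point `μ* = ∇Φ*(∇Φ(μ₀) − a)` attains the infimum of `μ ↦ ⟨μ, a⟩ + D_Φ(μ, μ₀)`
over the simplex. -/
theorem gaa_update_attains_inf {Θ : Type*} [Fintype Θ] [Nonempty Θ]
    (Φ : (Θ → ℝ) → ℝ) (gradΦ gradConj : (Θ → ℝ) → Θ → ℝ)
    (hconv : StrictConvexOn ℝ (probSimplex Θ) Φ)
    (hlsc : LowerSemicontinuousOn Φ (probSimplex Θ))
    (hdiff : ∀ μ ∈ probSimplexRI Θ,
      HasFDerivWithinAt Φ (toCLM (gradΦ μ)) (probSimplex Θ) μ)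
    (hconjdiff : ∀ v : Θ → ℝ, HasFDerivAt (conjF Φ) (toCLM (gradConj v)) v)
    (hmem : ∀ v : Θ → ℝ, gradConj v ∈ probSimplexRI Θ)
    (hinv₁ : ∀ μ ∈ probSimplexRI Θ, gradConj (gradΦ μ) = μ)
    (hinv₂ : ∀ v : Θ → ℝ, ∃ c : ℝ, gradΦ (gradConj v) = v + c • (1 : Θ → ℝ))
    (μ₀ : Θ → ℝ) (hμ₀ : μ₀ ∈ probSimplexRI Θ) (a : Θ → ℝ) :
    gradConj (gradΦ μ₀ - a) ∈ probSimplex Θ ∧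
      ∀ μ ∈ probSimplex Θ,
        ip (gradConj (gradΦ μ₀ - a)) a + bregDiv Φ gradΦ (gradConj (gradΦ μ₀ - a)) μ₀
          ≤ ip μ a + bregDiv Φ gradΦ μ μ₀ := by
  
  classical
  set v : Θ → ℝ := gradΦ μ₀ - a with hv
  set μs : Θ → ℝ := gradConj v with hμs
  have hμsRI : μs ∈ probSimplexRI Θ := hmem v
  have hμsS : μs ∈ probSimplex Θ := ⟨fun θ => (hμsRI.1 θ).le, hμsRI.2⟩
  obtain ⟨c, hc⟩ := hinv₂ v
  have hipCLM : ∀ (g w : Θ → ℝ), (toCLM g) w = ip g w := by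
    intro g w
    simp [toCLM, ip, ContinuousLinearMap.sum_apply, smul_eq_mul]
  refine ⟨hμsS, fun μ hμ => ?_⟩
  -- gradient inequality at μs
  have hgi := convex_grad_ineq hconv.convexOn hμsS hμ (hdiff μs hμsRI)
  rw [hipCLM] at hgi
  have hkey : ip (gradΦ μs) (fun θ => μ θ - μs θ) ≤ Φ μ - Φ μs := by
    have : (μ - μs) = (fun θ => μ θ - μs θ) := rfl
    rwa [this] at hgi
  have hsum : ∑ θ, (μ θ - μs θ) = 0 := by
    rw [Finset.sum_sub_distrib, hμ.2, hμsRI.2]; ring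
  have hexp : ip (gradΦ μs) (fun θ => μ θ - μs θ)
      = ip (gradΦ μ₀) (fun θ => μ θ - μs θ) - ip a (fun θ => μ θ - μs θ)
        + c * ∑ θ, (μ θ - μs θ) := by
    rw [hc]
    simp only [ip, hv, Pi.add_apply, Pi.sub_apply, Pi.smul_apply, Pi.one_apply,
      smul_eq_mul, mul_one]
    rw [Finset.mul_sum, ← Finset.sum_sub_distrib, ← Finset.sum_add_distrib]
    congr 1; ext θ; ring
  rw [hexp, hsum, mul_zero, add_zero] at hkey
  have hA : ip (gradΦ μ₀) (fun θ => μ θ - μs θ)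
      = ip (gradΦ μ₀) (fun θ => μ θ - μ₀ θ) - ip (gradΦ μ₀) (fun θ => μs θ - μ₀ θ) := by
    simp only [ip, ← Finset.sum_sub_distrib]; congr 1; ext θ; ring
  have hB : ip a (fun θ => μ θ - μs θ) = ip μ a - ip μs a := by
    simp only [ip, ← Finset.sum_sub_distrib]; congr 1; ext θ; ring
  rw [hA, hB] at hkey
  simp only [bregDiv]
  linarith
end

section
/- (Main theorem, generalised aggregating algorithm bound.) Let Θ be a finite nonempty set, X a set of observations, Δ_X a set of predictions, and ℓ : Δ_X → ℝ^X a loss. Let Φ : Δ_Θ → ℝ be a differentiable entropy with differentiable conjugate Φ*, satisfying ∇Φ(∇Φ*(v)) − v ∈ ℝ·𝟏, ∇Φ*(v + α𝟏) = ∇Φ*(v), and the Fenchel–Young equality Φ*(∇Φ(μ)) = ⟨μ, ∇Φ(μ)⟩ − Φ(μ) on the relative interior of Δ_Θ. Suppose ℓ is Φ-mixable. Fix π in the relative interior of Δ_Θ, observations x¹, …, x^T ∈ X, and expert predictions p^t_θ ∈ Δ_X for t = 1, …, T and θ ∈ Θ; set α^t(θ) := ℓ_{x^t}(p^t_θ),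 μ⁰ := π and μ^t := ∇Φ*(∇Φ(μ^{t−1}) − α^t). Suppose p¹, …, p^T ∈ Δ_X satisfy the mixability inequality ℓ_{x^t}(p^t) ≤ −Φ*(−λ^Φ(μ^{t−1}) − α^t) for each t (such p^t exist by Φ-mixability). Then for every θ ∈ Θ: Σ_{t=1}^T ℓ_{x^t}(p^t) ≤ Σ_{t=1}^T ℓ_{x^t}(p^t_θ) + D_Φ(δ_θ, π), where δ_θ is the point mass on θ. -/
open Finset

section AuxGAA
variable {Θ : Type*} [Fintype Θ]

lemma toCLM_apply_GAA (g u : Θ → ℝ) : toCLM g u = ip g u := by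
  simp [toCLM, ip, ContinuousLinearMap.sum_apply]

lemma convex_probSimplex_GAA : Convex ℝ (probSimplex Θ) := by
  intro a ha b hb s t hs ht hst
  refine ⟨fun θ => add_nonneg (mul_nonneg hs (ha.1 θ)) (mul_nonneg ht (hb.1 θ)), ?_⟩
  simp only [Pi.add_apply, Pi.smul_apply, smul_eq_mul]
  rw [Finset.sum_add_distrib, ← Finset.mul_sum, ← Finset.mul_sum, ha.2, hb.2]
  linarith

lemma grad_ineq_GAA {Φ : (Θ → ℝ) → ℝ} {g π : Θ → ℝ}
    (hconv : ConvexOn ℝ (probSimplex Θ) Φ)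
    (hπ : π ∈ probSimplex Θ)
    (hd : HasFDerivWithinAt Φ (toCLM g) (probSimplex Θ) π)
    {μ : Θ → ℝ} (hμ : μ ∈ probSimplex Θ) :
    Φ π + ip g (μ - π) ≤ Φ μ := by
  set γ : ℝ → Θ → ℝ := fun s => π + s • (μ - π) with hγdef
  have hγ0 : γ 0 = π := by funext θ; simp [hγdef]
  have hγ1 : γ 1 = μ := by funext θ; simp [hγdef]
  have hmaps : Set.MapsTo γ (Set.Icc (0:ℝ) 1) (probSimplex Θ) := by
    intro s hs
    have h1 : γ s = (1 - s) • π + s • μ := by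
      funext θ
      simp only [hγdef, Pi.add_apply, Pi.smul_apply, Pi.sub_apply, smul_eq_mul]
      ring
    rw [h1]
    exact convex_probSimplex_GAA hπ hμ (by linarith [hs.2]) hs.1 (by ring)
  have hconvh : ConvexOn ℝ (Set.Icc (0:ℝ) 1) (Φ ∘ γ) := by
    refine ⟨convex_Icc 0 1, fun s hs t ht a b ha hb hab => ?_⟩
    have h1 : γ (a • s + b • t) = a • γ s + b • γ t := by
      funext θ
      simp only [hγdef, Pi.add_apply, Pi.smul_apply, Pi.sub_apply, smul_eq_mul]
      linear_combination (π θ) * hab.symm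
    show Φ (γ (a • s + b • t)) ≤ _
    rw [h1]
    exact hconv.2 (hmaps hs) (hmaps ht) ha hb hab
  have hγd : HasDerivWithinAt γ (μ - π) (Set.Icc (0:ℝ) 1) 0 := by
    have h2 : HasDerivAt γ (μ - π) 0 := by
      exact (((hasDerivAt_id (0:ℝ)).smul_const (μ - π)).const_add π).congr_deriv (by simp)
    exact h2.hasDerivWithinAt
  have hd' : HasFDerivWithinAt Φ (toCLM g) (probSimplex Θ) (γ 0) := by
    rw [hγ0]; exact hd
  have hcomp : HasDerivWithinAt (Φ ∘ γ) (toCLM g (μ - π)) (Set.Icc (0:ℝ) 1) 0 :=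
    hd'.comp_hasDerivWithinAt 0 hγd hmaps
  have hslope := hconvh.le_slope_of_hasDerivWithinAt (Set.left_mem_Icc.2 zero_le_one)
    (Set.right_mem_Icc.2 zero_le_one) zero_lt_one hcomp
  rw [slope_def_field] at hslope
  simp only [Function.comp_apply, hγ0, hγ1, sub_zero, div_one] at hslope
  rw [toCLM_apply_GAA] at hslope
  linarith

lemma mem_le_conjF_GAA {Φ : (Θ → ℝ) → ℝ} {g π : Θ → ℝ}
    (hconv : ConvexOn ℝ (probSimplex Θ) Φ)
    (hπ : π ∈ probSimplex Θ)
    (hd : HasFDerivWithinAt Φ (toCLM g) (probSimplex Θ) π)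
    (v : Θ → ℝ) {μ : Θ → ℝ} (hμ : μ ∈ probSimplex Θ) :
    ip μ v - Φ μ ≤ conjF Φ v := by
  have hbdd : BddAbove ((fun μ => ip μ v - Φ μ) '' probSimplex Θ) := by
    refine ⟨(∑ θ, |v θ - g θ|) + ip g π - Φ π, ?_⟩
    rintro y ⟨ν, hν, rfl⟩
    have hlow := grad_ineq_GAA hconv hπ hd hν
    have h2 : ip ν v - ip g (ν - π) = ip ν (v - g) + ip g π := by
      simp only [ip, Pi.sub_apply, ← Finset.sum_sub_distrib, ← Finset.sum_add_distrib]
      exact Finset.sum_congr rfl fun θ' _ => by ring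
    have h3 : ip ν (v - g) ≤ ∑ θ, |v θ - g θ| := by
      refine Finset.sum_le_sum fun θ' _ => ?_
      have hν1 : ν θ' ≤ 1 := by
        have := Finset.single_le_sum (fun i _ => hν.1 i) (Finset.mem_univ θ')
        rw [hν.2] at this; exact this
      calc ν θ' * (v - g) θ' ≤ ν θ' * |(v - g) θ'| :=
            mul_le_mul_of_nonneg_left (le_abs_self _) (hν.1 θ')
        _ ≤ 1 * |(v - g) θ'| :=
            mul_le_mul_of_nonneg_right hν1 (abs_nonneg _)
        _ = |v θ' - g θ'| := by rw [one_mul]; rfl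
    dsimp only
    linarith
  exact le_csSup hbdd ⟨μ, hμ, rfl⟩

lemma conj_translate_GAA {Φ : (Θ → ℝ) → ℝ} {gradConj : (Θ → ℝ) → Θ → ℝ}
    (hconjdiff : ∀ v : Θ → ℝ, HasFDerivAt (conjF Φ) (toCLM (gradConj v)) v)
    (hmem : ∀ v : Θ → ℝ, gradConj v ∈ probSimplexRI Θ)
    (v : Θ → ℝ) (c : ℝ) :
    conjF Φ (v + c • (1 : Θ → ℝ)) = conjF Φ v + c := by
  have key : ∀ s : ℝ, HasDerivAt (fun s : ℝ => conjF Φ (v + s • (1 : Θ → ℝ))) 1 s := by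
    intro s
    have h1 : HasDerivAt (fun s : ℝ => v + s • (1 : Θ → ℝ)) (1 : Θ → ℝ) s := by
      simpa using ((hasDerivAt_id s).smul_const (1 : Θ → ℝ)).const_add v
    have h2 := (hconjdiff (v + s • (1 : Θ → ℝ))).comp_hasDerivAt s h1
    have h3 : toCLM (gradConj (v + s • (1 : Θ → ℝ))) (1 : Θ → ℝ) = 1 := by
      rw [toCLM_apply_GAA]
      have := (hmem (v + s • (1 : Θ → ℝ))).2
      simpa [ip] using this
    rw [h3] at h2
    exact h2
  have hD : ∀ s : ℝ, HasDerivAt (fun s : ℝ => conjF Φ (v + s • (1 : Θ → ℝ)) - s) 0 s := by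
    intro s
    exact ((key s).sub (hasDerivAt_id s)).congr_deriv (by simp)
  have hconst := is_const_of_deriv_eq_zero (f := fun s : ℝ => conjF Φ (v + s • (1 : Θ → ℝ)) - s)
    (fun s => (hD s).differentiableAt) (fun s => (hD s).deriv) c 0
  simp only [zero_smul, add_zero, sub_zero] at hconst
  linarith

end AuxGAA

/-- Theorem 2, main theorem of the paper: if `ℓ` is `Φ`-mixable, the
generalised aggregating algorithm guarantees, for every expert `θ`,
`∑_t ℓ_{x^t}(p^t) ≤ ∑_t ℓ_{x^t}(p^t_θ) + D_Φ(δ_θ, π)`. -/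
theorem generalised_aggregating_algorithm_regret
    {Θ : Type*} [Fintype Θ] [Nonempty Θ] [DecidableEq Θ] {X P : Type*}
    (ℓ : P → X → ℝ)
    (Φ : (Θ → ℝ) → ℝ) (gradΦ gradConj : (Θ → ℝ) → Θ → ℝ)
    (hconv : ConvexOn ℝ (probSimplex Θ) Φ)
    (hlsc : LowerSemicontinuousOn Φ (probSimplex Θ))
    (hdiff : ∀ μ ∈ probSimplexRI Θ,
      HasFDerivWithinAt Φ (toCLM (gradΦ μ)) (probSimplex Θ) μ)
    (hconjdiff : ∀ v : Θ → ℝ, HasFDerivAt (conjF Φ) (toCLM (gradConj v)) v)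
    (hmem : ∀ v : Θ → ℝ, gradConj v ∈ probSimplexRI Θ)
    (hinv₂ : ∀ v : Θ → ℝ, ∃ c : ℝ, gradΦ (gradConj v) = v + c • (1 : Θ → ℝ))
    (htrans : ∀ (v : Θ → ℝ) (α : ℝ), gradConj (v + α • (1 : Θ → ℝ)) = gradConj v)
    (hFY : ∀ μ ∈ probSimplexRI Θ, conjF Φ (gradΦ μ) = ip μ (gradΦ μ) - Φ μ)
    -- `Φ`-mixability of `ℓ`
    (hmix : ∀ p : Θ → P, ∀ μ ∈ probSimplexRI Θ, ∃ q : P, ∀ x : X,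
      ℓ q x ≤ -conjF Φ (fun θ => -lamLoss Φ gradΦ μ θ - ℓ (p θ) x))
    -- the game: prior, observations, expert predictions
    (π : Θ → ℝ) (hπ : π ∈ probSimplexRI Θ)
    (T : ℕ) (x : ℕ → X) (p : ℕ → Θ → P)
    -- the GAA mixture updates `μ^t = ∇Φ*(∇Φ(μ^{t−1}) − α^t)` with `α^t(θ) = ℓ_{x^t}(p^t_θ)`
    (μ : ℕ → Θ → ℝ) (h0 : μ 0 = π)
    (hrec : ∀ t < T, μ (t + 1) = gradConj (gradΦ (μ t) - fun θ => ℓ (p t θ) (x t)))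
    -- the GAA predictions, satisfying the mixability inequality each round
    (q : ℕ → P)
    (hq : ∀ t < T,
      ℓ (q t) (x t) ≤ -conjF Φ (fun θ => -lamLoss Φ gradΦ (μ t) θ - ℓ (p t θ) (x t)))
    (θ : Θ) :
    ∑ t ∈ Finset.range T, ℓ (q t) (x t)
      ≤ ∑ t ∈ Finset.range T, ℓ (p t θ) (x t)
        + bregDiv Φ gradΦ (Pi.single θ 1) π := by
  classical
  -- abbreviations
  set w : ℕ → Θ → ℝ := fun t θ' => gradΦ π θ' - ∑ s ∈ Finset.range t, ℓ (p s θ') (x s)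
    with hwdef
  have hπΔ : π ∈ probSimplex Θ := ⟨fun θ' => (hπ.1 θ').le, hπ.2⟩
  -- invariant: μ t ∈ RI and gradΦ (μ t) = w t + c • 1
  have hinvariant : ∀ t, t ≤ T →
      μ t ∈ probSimplexRI Θ ∧ ∃ c : ℝ, gradΦ (μ t) = w t + c • (1 : Θ → ℝ) := by
    intro t
    induction t with
    | zero =>
      intro _
      refine ⟨h0 ▸ hπ, 0, ?_⟩
      funext θ'
      simp [hwdef, h0]
    | succ t ih =>
      intro ht
      have ht' : t < T := Nat.lt_of_succ_le ht
      obtain ⟨hRI, c, hc⟩ := ih ht'.le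
      have harg : (gradΦ (μ t) - fun θ' => ℓ (p t θ') (x t))
          = w (t + 1) + c • (1 : Θ → ℝ) := by
        funext θ'
        have := congrFun hc θ'
        simp only [Pi.add_apply, Pi.smul_apply, Pi.one_apply, smul_eq_mul, mul_one] at this
        simp only [Pi.sub_apply, Pi.add_apply, Pi.smul_apply, Pi.one_apply, smul_eq_mul,
          mul_one, hwdef, Finset.sum_range_succ]
        rw [this]
        simp only [hwdef]
        ring
      have hμ1 : μ (t + 1) = gradConj (w (t + 1)) := by
        rw [hrec t ht', harg, htrans]
      obtain ⟨c', hc'⟩ := hinv₂ (w (t + 1))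
      exact ⟨hμ1 ▸ hmem _, c', by rw [hμ1, hc']⟩
  -- per-round bound
  have hround : ∀ t, t < T →
      ℓ (q t) (x t) ≤ conjF Φ (w t) - conjF Φ (w (t + 1)) := by
    intro t ht
    obtain ⟨hRI, c, hc⟩ := hinvariant t ht.le
    have e1 : (fun θ' => -lamLoss Φ gradΦ (μ t) θ' - ℓ (p t θ') (x t))
        = (gradΦ (μ t) - fun θ' => ℓ (p t θ') (x t))
          + (-(conjF Φ (gradΦ (μ t)))) • (1 : Θ → ℝ) := by
      funext θ'
      simp only [lamLoss, Pi.add_apply, Pi.sub_apply, Pi.smul_apply, Pi.one_apply,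
        smul_eq_mul, mul_one]
      ring
    have e2 : conjF Φ (fun θ' => -lamLoss Φ gradΦ (μ t) θ' - ℓ (p t θ') (x t))
        = conjF Φ (gradΦ (μ t) - fun θ' => ℓ (p t θ') (x t)) - conjF Φ (gradΦ (μ t)) := by
      rw [e1, conj_translate_GAA hconjdiff hmem]
      ring
    have harg : (gradΦ (μ t) - fun θ' => ℓ (p t θ') (x t))
        = w (t + 1) + c • (1 : Θ → ℝ) := by
      funext θ'
      have := congrFun hc θ'
      simp only [Pi.add_apply, Pi.smul_apply, Pi.one_apply, smul_eq_mul, mul_one] at this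
      simp only [Pi.sub_apply, Pi.add_apply, Pi.smul_apply, Pi.one_apply, smul_eq_mul,
        mul_one, hwdef, Finset.sum_range_succ]
      rw [this]
      simp only [hwdef]
      ring
    have e3 : conjF Φ (gradΦ (μ t)) = conjF Φ (w t) + c := by
      rw [hc, conj_translate_GAA hconjdiff hmem]
    have e4 : conjF Φ (gradΦ (μ t) - fun θ' => ℓ (p t θ') (x t))
        = conjF Φ (w (t + 1)) + c := by
      rw [harg, conj_translate_GAA hconjdiff hmem]
    have := hq t ht
    rw [e2] at this
    rw [e3, e4] at this
    linarith
  -- telescoping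
  have hsum : ∑ t ∈ Finset.range T, ℓ (q t) (x t)
      ≤ conjF Φ (w 0) - conjF Φ (w T) := by
    calc ∑ t ∈ Finset.range T, ℓ (q t) (x t)
        ≤ ∑ t ∈ Finset.range T, (conjF Φ (w t) - conjF Φ (w (t + 1))) :=
          Finset.sum_le_sum fun t htm => hround t (Finset.mem_range.mp htm)
      _ = conjF Φ (w 0) - conjF Φ (w T) :=
          Finset.sum_range_sub' (fun t => conjF Φ (w t)) T
  -- the two endpoint evaluations
  have hw0 : w 0 = gradΦ π := by funext θ'; simp [hwdef]
  have hFY0 : conjF Φ (w 0) = ip π (gradΦ π) - Φ π := by rw [hw0]; exact hFY π hπ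
  have hδ : (Pi.single θ 1 : Θ → ℝ) ∈ probSimplex Θ := by
    constructor
    · intro θ'
      rcases eq_or_ne θ' θ with h | h <;> simp [Pi.single_apply, h]
    · simp [Pi.single_apply]
  have hlow : ip (Pi.single θ 1) (w T) - Φ (Pi.single θ 1) ≤ conjF Φ (w T) :=
    mem_le_conjF_GAA hconv hπΔ (hdiff π hπ) (w T) hδ
  have hipδ : ip (Pi.single θ 1 : Θ → ℝ) (w T) = w T θ := by
    simp [ip, Pi.single_apply]
  have hipδ2 : ip (gradΦ π) (fun θ' => (Pi.single θ 1 : Θ → ℝ) θ' - π θ')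
      = gradΦ π θ - ip π (gradΦ π) := by
    simp only [ip, mul_sub]
    rw [Finset.sum_sub_distrib]
    congr 1
    · simp [Pi.single_apply, mul_ite]
    · exact Finset.sum_congr rfl fun θ' _ => mul_comm _ _
  have hwT : w T θ = gradΦ π θ - ∑ t ∈ Finset.range T, ℓ (p t θ) (x t) := rfl
  rw [hipδ, hwT] at hlow
  simp only [bregDiv, hipδ2]
  rw [hFY0] at hsum
  linarith
end

section
/- (Strengthened main bound.) Under the hypotheses of the main theorem (Θ finite nonempty, Φ a differentiable entropy with differentiable conjugate satisfying ∇Φ(∇Φ*(v)) − v ∈ ℝ·𝟏, translation invariance of ∇Φ*, and Fenchel–Young equality on the relative interior; ℓ : Δ_X → ℝ^X Φ-mixable; π in the relative interior of Δ_Θ; μ⁰ := π, μ^t := ∇Φ*(∇Φ(μ^{t−1}) − α^t) where α^t(θ) := ℓ_{x^t}(p^t_θ); and p^t satisfies ℓ_{x^t}(p^t) ≤ −Φ*(−λ^Φ(μ^{t−1}) − α^t) for each t), the generalised aggregating algorithm satisfies, for every μ' ∈ Δ_Θ: Σ_{t=1}^T ℓ_{x^t}(p^t) ≤ ⟨μ',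 Σ_{t=1}^T α^t⟩ + D_Φ(μ', π). -/
open Finset

section Aux

variable {Θ : Type*} [Fintype Θ] [Nonempty Θ] [DecidableEq Θ]

set_option linter.unusedSectionVars false

lemma uniform_mem_probSimplex :
    (fun _ : Θ => (Fintype.card Θ : ℝ)⁻¹) ∈ probSimplex Θ := by
  have hcard : (0 : ℝ) < Fintype.card Θ := by positivity
  refine ⟨fun θ => by positivity, ?_⟩
  rw [Finset.sum_const, Finset.card_univ, nsmul_eq_mul]
  field_simp

lemma single_mem_probSimplex (θ : Θ) : (Pi.single θ 1 : Θ → ℝ) ∈ probSimplex Θ := by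
  constructor
  · intro θ'
    by_cases h : θ' = θ <;> simp [Pi.single_apply, h]
  · simp [Pi.single_apply]

lemma mem_probSimplex_le_one {μ : Θ → ℝ} (h : μ ∈ probSimplex Θ) (θ : Θ) : μ θ ≤ 1 := by
  calc μ θ ≤ ∑ θ', μ θ' :=
        Finset.single_le_sum (fun i _ => h.1 i) (Finset.mem_univ θ)
    _ = 1 := h.2

/-- Jensen upper bound: a convex function on the simplex is bounded above by the
sum of absolute values at the vertices. -/
lemma convexOn_upper_bound (Φ : (Θ → ℝ) → ℝ) (hconv : ConvexOn ℝ (probSimplex Θ) Φ)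
    {μ : Θ → ℝ} (hμ : μ ∈ probSimplex Θ) :
    Φ μ ≤ ∑ θ, |Φ (Pi.single θ 1)| := by
  have hrep : μ = ∑ θ, μ θ • (Pi.single θ 1 : Θ → ℝ) := by
    funext θ'
    simp [Finset.sum_apply, Pi.single_apply, mul_ite]
  have h1 := hconv.map_sum_le (t := Finset.univ) (w := μ) (p := fun θ => Pi.single θ 1)
    (fun i _ => hμ.1 i) hμ.2 (fun i _ => single_mem_probSimplex i)
  calc Φ μ = Φ (∑ θ, μ θ • (Pi.single θ 1 : Θ → ℝ)) := by rw [← hrep]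
    _ ≤ ∑ θ, μ θ * Φ (Pi.single θ 1) := h1
    _ ≤ ∑ θ, |Φ (Pi.single θ 1)| := by
        apply Finset.sum_le_sum
        intro θ _
        calc μ θ * Φ (Pi.single θ 1) ≤ μ θ * |Φ (Pi.single θ 1)| := by
              exact mul_le_mul_of_nonneg_left (le_abs_self _) (hμ.1 θ)
          _ ≤ 1 * |Φ (Pi.single θ 1)| :=
              mul_le_mul_of_nonneg_right (mem_probSimplex_le_one hμ θ) (abs_nonneg _)
          _ = |Φ (Pi.single θ 1)| := one_mul _

/-- A convex function on the simplex is bounded below. -/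
lemma convexOn_lower_bound (Φ : (Θ → ℝ) → ℝ) (hconv : ConvexOn ℝ (probSimplex Θ) Φ) :
    ∃ m : ℝ, ∀ μ ∈ probSimplex Θ, m ≤ Φ μ := by
  classical
  set n : ℕ := Fintype.card Θ with hn
  have hn1 : 1 ≤ n := Fintype.card_pos
  set C : ℝ := ∑ θ, |Φ (Pi.single θ 1)| with hC
  set z : Θ → ℝ := fun _ => (n : ℝ)⁻¹ with hz
  have hzmem : z ∈ probSimplex Θ := uniform_mem_probSimplex
  set t : ℝ := ((n : ℝ) + 1)⁻¹ with ht
  have hnpos : (0 : ℝ) < n := by exact_mod_cast hn1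
  have ht0 : 0 < t := by positivity
  have ht1 : t < 1 := by
    rw [ht]
    rw [inv_lt_one_iff₀]; right; linarith
  refine ⟨(Φ z - (1 - t) * C) / t, ?_⟩
  intro μ hμ
  set w : Θ → ℝ := fun θ => (1 - t)⁻¹ * (z θ - t * μ θ) with hw
  have h1t : (0:ℝ) < 1 - t := by linarith
  have hwmem : w ∈ probSimplex Θ := by
    constructor
    · intro θ
      have hμ1 : μ θ ≤ 1 := mem_probSimplex_le_one hμ θ
      have : t * μ θ ≤ t := by nlinarith
      have hz1 : t < z θ := by
        rw [hz, ht]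
        apply inv_strictAnti₀ hnpos
        linarith
      have : z θ - t * μ θ ≥ 0 := by linarith
      positivity
    · rw [hw]
      rw [← Finset.mul_sum]
      have : ∑ θ, (z θ - t * μ θ) = 1 - t := by
        rw [Finset.sum_sub_distrib, ← Finset.mul_sum, hμ.2, hzmem.2]
        ring
      rw [this]
      field_simp
  have hcomb : z = t • μ + (1 - t) • w := by
    funext θ
    rw [hw]
    simp only [Pi.add_apply, Pi.smul_apply, smul_eq_mul]
    field_simp
    ring
  have hjensen : Φ z ≤ t * Φ μ + (1 - t) * Φ w := by
    rw [hcomb]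
    exact hconv.2 hμ hwmem (le_of_lt ht0) (le_of_lt h1t) (by ring)
  have hwC : Φ w ≤ C := convexOn_upper_bound Φ hconv hwmem
  rw [div_le_iff₀ ht0]
  nlinarith

/-- The set defining `conjF` is nonempty. -/
lemma conj_set_nonempty (Φ : (Θ → ℝ) → ℝ) (v : Θ → ℝ) :
    ((fun μ => ip μ v - Φ μ) '' probSimplex Θ).Nonempty :=
  ⟨_, Set.mem_image_of_mem _ (uniform_mem_probSimplex (Θ := Θ))⟩

/-- The set defining `conjF` is bounded above, assuming a lower bound on `Φ`. -/
lemma conj_set_bddAbove (Φ : (Θ → ℝ) → ℝ) {m : ℝ}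
    (hm : ∀ μ ∈ probSimplex Θ, m ≤ Φ μ) (v : Θ → ℝ) :
    BddAbove ((fun μ => ip μ v - Φ μ) '' probSimplex Θ) := by
  refine ⟨(∑ θ, |v θ|) - m, ?_⟩
  rintro r ⟨μ, hμ, rfl⟩
  have hip : ip μ v ≤ ∑ θ, |v θ| := by
    rw [ip]
    apply Finset.sum_le_sum
    intro θ _
    calc μ θ * v θ ≤ μ θ * |v θ| := mul_le_mul_of_nonneg_left (le_abs_self _) (hμ.1 θ)
      _ ≤ 1 * |v θ| := mul_le_mul_of_nonneg_right (mem_probSimplex_le_one hμ θ) (abs_nonneg _)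
      _ = |v θ| := one_mul _
  have := hm μ hμ
  simp only
  linarith

/-- Fenchel–Young inequality. -/
lemma le_conjF (Φ : (Θ → ℝ) → ℝ) {m : ℝ}
    (hm : ∀ μ ∈ probSimplex Θ, m ≤ Φ μ) (v : Θ → ℝ)
    {μ : Θ → ℝ} (hμ : μ ∈ probSimplex Θ) :
    ip μ v - Φ μ ≤ conjF Φ v :=
  le_csSup (conj_set_bddAbove Φ hm v) (Set.mem_image_of_mem _ hμ)

/-- Translation property of the restricted conjugate: `Φ*(v + c·𝟏) = Φ*(v) + c`. -/
lemma conjF_shift (Φ : (Θ → ℝ) → ℝ) {m : ℝ}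
    (hm : ∀ μ ∈ probSimplex Θ, m ≤ Φ μ) (v : Θ → ℝ) (c : ℝ) :
    conjF Φ (v + c • (1 : Θ → ℝ)) = conjF Φ v + c := by
  have himg : (fun μ => ip μ (v + c • (1 : Θ → ℝ)) - Φ μ) '' probSimplex Θ
      = (fun r => r + c) '' ((fun μ => ip μ v - Φ μ) '' probSimplex Θ) := by
    rw [Set.image_image]
    apply Set.image_congr
    intro μ hμ
    have : ip μ (v + c • (1 : Θ → ℝ)) = ip μ v + c := by
      rw [ip, ip]
      simp only [Pi.add_apply, Pi.smul_apply, Pi.one_apply, smul_eq_mul, mul_one, mul_add]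
      rw [Finset.sum_add_distrib, ← Finset.sum_mul, hμ.2, one_mul]
    rw [this]; ring
  have hne := conj_set_nonempty Φ v
  have hbdd := conj_set_bddAbove Φ hm v
  have hlub : IsLUB ((fun r => r + c) '' ((fun μ => ip μ v - Φ μ) '' probSimplex Θ))
      (conjF Φ v + c) := by
    have h := isLUB_csSup hne hbdd
    constructor
    · rintro r ⟨s, hs, rfl⟩
      have := h.1 hs
      simpa [conjF] using add_le_add_right this c
    · intro b hb
      have : ∀ s ∈ (fun μ => ip μ v - Φ μ) '' probSimplex Θ, s ≤ b - c := by
        intro s hs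
        have := hb (Set.mem_image_of_mem _ hs)
        linarith
      have h2 := h.2 this
      simp only [conjF]
      linarith
  rw [conjF, himg, hlub.csSup_eq (hne.image _)]

end Aux

/-- strengthened main bound, eq. (14) of the paper: under the
hypotheses of the main theorem, the generalised aggregating algorithm satisfies
`∑_t ℓ_{x^t}(p^t) ≤ ⟨μ', ∑_t α^t⟩ + D_Φ(μ', π)` for every `μ' ∈ Δ_Θ`. -/
theorem generalised_aggregating_algorithm_strong_bound
    {Θ : Type*} [Fintype Θ] [Nonempty Θ] {X P : Type*}
    (ℓ : P → X → ℝ)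
    (Φ : (Θ → ℝ) → ℝ) (gradΦ gradConj : (Θ → ℝ) → Θ → ℝ)
    (hconv : ConvexOn ℝ (probSimplex Θ) Φ)
    (hlsc : LowerSemicontinuousOn Φ (probSimplex Θ))
    (hdiff : ∀ μ ∈ probSimplexRI Θ,
      HasFDerivWithinAt Φ (toCLM (gradΦ μ)) (probSimplex Θ) μ)
    (hconjdiff : ∀ v : Θ → ℝ, HasFDerivAt (conjF Φ) (toCLM (gradConj v)) v)
    (hmem : ∀ v : Θ → ℝ, gradConj v ∈ probSimplexRI Θ)
    (hinv₂ : ∀ v : Θ → ℝ, ∃ c : ℝ, gradΦ (gradConj v) = v + c • (1 : Θ → ℝ))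
    (htrans : ∀ (v : Θ → ℝ) (α : ℝ), gradConj (v + α • (1 : Θ → ℝ)) = gradConj v)
    (hFY : ∀ μ ∈ probSimplexRI Θ, conjF Φ (gradΦ μ) = ip μ (gradΦ μ) - Φ μ)
    -- `Φ`-mixability of `ℓ`
    (hmix : ∀ p : Θ → P, ∀ μ ∈ probSimplexRI Θ, ∃ q : P, ∀ x : X,
      ℓ q x ≤ -conjF Φ (fun θ => -lamLoss Φ gradΦ μ θ - ℓ (p θ) x))
    -- the game: prior, observations, expert predictions
    (π : Θ → ℝ) (hπ : π ∈ probSimplexRI Θ)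
    (T : ℕ) (x : ℕ → X) (p : ℕ → Θ → P)
    -- the GAA mixture updates `μ^t = ∇Φ*(∇Φ(μ^{t−1}) − α^t)` with `α^t(θ) = ℓ_{x^t}(p^t_θ)`
    (μ : ℕ → Θ → ℝ) (h0 : μ 0 = π)
    (hrec : ∀ t < T, μ (t + 1) = gradConj (gradΦ (μ t) - fun θ => ℓ (p t θ) (x t)))
    -- the GAA predictions, satisfying the mixability inequality each round
    (q : ℕ → P)
    (hq : ∀ t < T,
      ℓ (q t) (x t) ≤ -conjF Φ (fun θ => -lamLoss Φ gradΦ (μ t) θ - ℓ (p t θ) (x t))) :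
    ∀ μ' ∈ probSimplex Θ,
      ∑ t ∈ Finset.range T, ℓ (q t) (x t)
        ≤ ip μ' (fun θ => ∑ t ∈ Finset.range T, ℓ (p t θ) (x t))
          + bregDiv Φ gradΦ μ' π := by
  classical
  intro μ' hμ'
  obtain ⟨m, hm⟩ := convexOn_lower_bound Φ hconv
  set a : ℕ → Θ → ℝ := fun t θ => ℓ (p t θ) (x t) with ha
  set v : ℕ → Θ → ℝ := fun t => gradΦ (μ t) with hv
  set G : ℕ → ℝ := fun n => conjF Φ (v n) - ip μ' (v n) with hG
  have hμ'1 : ∑ θ, μ' θ = 1 := hμ'.2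
  -- per-round inequality
  have hstep : ∀ t < T, ℓ (q t) (x t) - ip μ' (a t) ≤ G t - G (t + 1) := by
    intro t ht
    obtain ⟨c, hc⟩ := hinv₂ (v t - a t)
    have hv1 : v (t + 1) = (v t - a t) + c • (1 : Θ → ℝ) := by
      show gradΦ (μ (t + 1)) = _
      rw [hrec t ht]
      exact hc
    have key : (fun θ => -lamLoss Φ gradΦ (μ t) θ - ℓ (p t θ) (x t))
        = (v t - a t) + (-(conjF Φ (v t))) • (1 : Θ → ℝ) := by
      funext θ
      simp only [lamLoss, Pi.add_apply, Pi.sub_apply, Pi.smul_apply, Pi.one_apply,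
        smul_eq_mul, mul_one]
      show -(conjF Φ (gradΦ (μ t)) - gradΦ (μ t) θ) - ℓ (p t θ) (x t) = _
      ring
    have h1 : conjF Φ (fun θ => -lamLoss Φ gradΦ (μ t) θ - ℓ (p t θ) (x t))
        = conjF Φ (v t - a t) - conjF Φ (v t) := by
      rw [key, conjF_shift Φ hm]
      ring
    have h2 : conjF Φ (v (t + 1)) = conjF Φ (v t - a t) + c := by
      rw [hv1, conjF_shift Φ hm]
    have h3 : ip μ' (a t) = ip μ' (v t) - ip μ' (v (t + 1)) + c := by
      have hat : ∀ θ, a t θ = v t θ - v (t + 1) θ + c := by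
        intro θ
        have := congrFun hv1 θ
        simp only [Pi.add_apply, Pi.sub_apply, Pi.smul_apply, Pi.one_apply,
          smul_eq_mul, mul_one] at this
        linarith
      simp only [ip]
      calc ∑ θ, μ' θ * a t θ = ∑ θ, (μ' θ * v t θ - μ' θ * v (t + 1) θ + μ' θ * c) := by
            apply Finset.sum_congr rfl
            intro θ _
            rw [hat θ]; ring
        _ = ∑ θ, μ' θ * v t θ - ∑ θ, μ' θ * v (t + 1) θ + (∑ θ, μ' θ) * c := by
            rw [Finset.sum_add_distrib, Finset.sum_sub_distrib, Finset.sum_mul]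
        _ = ∑ θ, μ' θ * v t θ - ∑ θ, μ' θ * v (t + 1) θ + c := by rw [hμ'1, one_mul]
    have hq' := hq t ht
    rw [h1] at hq'
    simp only [hG]
    linarith
  -- telescoping
  have tele : ∑ t ∈ Finset.range T, (ℓ (q t) (x t) - ip μ' (a t)) ≤ G 0 - G T := by
    calc ∑ t ∈ Finset.range T, (ℓ (q t) (x t) - ip μ' (a t))
        ≤ ∑ t ∈ Finset.range T, (G t - G (t + 1)) :=
          Finset.sum_le_sum fun t ht => hstep t (Finset.mem_range.mp ht)
      _ = G 0 - G T := Finset.sum_range_sub' G T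
  -- swap sums
  have hsum : ∑ t ∈ Finset.range T, ip μ' (a t)
      = ip μ' (fun θ => ∑ t ∈ Finset.range T, ℓ (p t θ) (x t)) := by
    simp only [ip, Finset.mul_sum]
    rw [Finset.sum_comm]
  -- evaluate G 0 using Fenchel–Young equality at π
  have hG0 : G 0 = ip π (gradΦ π) - Φ π - ip μ' (gradΦ π) := by
    simp only [hG, hv, h0]
    rw [hFY π hπ]
  -- lower bound on G T by Fenchel–Young inequality
  have hGT : -(Φ μ') ≤ G T := by
    have := le_conjF Φ hm (v T) hμ'
    simp only [hG]
    linarith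
  -- put it together
  have hbd : bregDiv Φ gradΦ μ' π
      = Φ μ' - Φ π - (ip μ' (gradΦ π) - ip π (gradΦ π)) := by
    simp only [bregDiv, ip]
    have hsw : ∑ θ, gradΦ π θ * (μ' θ - π θ)
        = ∑ θ, μ' θ * gradΦ π θ - ∑ θ, π θ * gradΦ π θ := by
      rw [← Finset.sum_sub_distrib]
      exact Finset.sum_congr rfl fun θ _ => by ring
    rw [hsw]
  have hfinal : ∑ t ∈ Finset.range T, ℓ (q t) (x t)
      ≤ ∑ t ∈ Finset.range T, ip μ' (a t) + G 0 - G T := by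
    rw [Finset.sum_sub_distrib] at tele
    linarith
  rw [hsum] at hfinal
  rw [hbd]
  rw [hG0] at hfinal
  linarith
end
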